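/- Let h̃ be a largest-lift of ξ ∈ BDRY(τ̃_n, δ). If h̃_1, h̃_2 ∈ MÖBIUS(τ̃_n, δ) with ∂h̃_1 = ∂h̃_2 = ξ, and c_1, c_2 ≥ 0 with c_1 + c_2 = 1 satisfy h̃ = c_1·h̃_1 + c_2·h̃_2 (pointwise), then h̃ = h̃_1 or h̃ = h̃_2. -/

import Mathlib

open scoped Classical

/-! ## Common definitions: the plane `B`, honeycombs, and Möbius honeycombs.

Following Knutson–Tao "The honeycomb model of GL_n(C) tensor products I" and
Hwang "Saturation of Newell–Littlewood numbers" (arXiv:2409.00233). -/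

/-- Points of `ℝ³`, written as triples. -/
abbrev Pt : Type := ℝ × ℝ × ℝ

/-- The plane `B = {(x,y,z) ∈ ℝ³ : x + y + z = 0}`. -/
def planeB (p : Pt) : Prop := p.1 + p.2.1 + p.2.2 = 0

/-- The lattice points `B_ℤ = {(x,y,z) ∈ ℤ³ : x + y + z = 0}` of the plane `B`. -/
def latticeB (p : Pt) : Prop :=
  (∃ m : ℤ, p.1 = (m : ℝ)) ∧ (∃ m : ℤ, p.2.1 = (m : ℝ)) ∧ (∃ m : ℤ, p.2.2 = (m : ℝ)) ∧ planeB p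

/-- The two kinds of vertices of the graph `Γ_∞`: `Ã`-vertices and `B̃`-vertices. -/
inductive VK : Type
  | A | B
deriving DecidableEq

/-- Vertices `Ã_{i,j}`, `B̃_{i,j}` (for `i j : ℤ`) of the graph `Γ_∞`. -/
structure Vtx : Type where
  k : VK
  i : ℤ
  j : ℤ
deriving DecidableEq

/-- `AmbEdge t h d` holds when `(t, h)` is a directed edge of `Γ_∞` with direction
`d` under the direction map:  `(Ã_{i,j}, B̃_{i,j}) ↦ (-1,1,0)`,
`(Ã_{i,j}, B̃_{i-1,j}) ↦ (1,0,-1)`, `(Ã_{i,j}, B̃_{i-1,j-1}) ↦ (0,-1,1)`. -/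
inductive AmbEdge : Vtx → Vtx → Pt → Prop where
  | ne (i j : ℤ) : AmbEdge ⟨VK.A, i, j⟩ ⟨VK.B, i, j⟩ (-1, 1, 0)
  | sw (i j : ℤ) : AmbEdge ⟨VK.A, i, j⟩ ⟨VK.B, i - 1, j⟩ (1, 0, -1)
  | se (i j : ℤ) : AmbEdge ⟨VK.A, i, j⟩ ⟨VK.B, i - 1, j - 1⟩ (0, -1, 1)

/-! ### `GL_n` honeycombs and Littlewood–Richardson coefficients -/

/-- The vertex set of the graph `Δ_n` of the `GL_n` honeycomb tinkertoy `τ_n`: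
`Ã_{i,j}` for `1 ≤ i < j ≤ n` and `B̃_{i,j}` for `0 ≤ i < j ≤ n`. -/
def inDelta (n : ℕ) (v : Vtx) : Prop :=
  (v.k = VK.A ∧ 1 ≤ v.i ∧ v.i < v.j ∧ v.j ≤ (n : ℤ)) ∨
  (v.k = VK.B ∧ 0 ≤ v.i ∧ v.i < v.j ∧ v.j ≤ (n : ℤ))

/-- A honeycomb: a configuration of the `GL_n` honeycomb tinkertoy `τ_n`, i.e. a map
from the vertices of `Δ_n` to the plane `B` such that along every edge `e` the
difference `h(head e) - h(tail e)` is a nonnegative multiple of the direction `d(e)`.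
(We normalize such maps to vanish off `Δ_n` so that they faithfully encode maps
`V_{Δ_n} → B`.) -/
def IsHoneycomb (n : ℕ) (f : Vtx → Pt) : Prop :=
  (∀ v, inDelta n v → planeB (f v)) ∧
  (∀ t h d, AmbEdge t h d → inDelta n t → inDelta n h →
    ∃ a : ℝ, 0 ≤ a ∧ f h - f t = a • d) ∧
  (∀ v, ¬ inDelta n v → f v = 0)

/-- The Littlewood–Richardson coefficient `c^λ_{μ,ν}` (the multiplicity of `V_λ` in
`V_μ ⊗ V_ν` for polynomial `GL_n(ℂ)`-representations), realized via the
Knutson–Tao honeycomb model: the number of lattice honeycombs with boundary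
`∂h = (μ^*, ν^*, λ)`, where `μ^* = (-μ_n, …, -μ_1)` and the boundary coordinates are:
`λ_i` is the `x`-coordinate of `h(B̃_{i-1,n})`, `μ_i` the `y`-coordinate of
`h(B̃_{n-i,n-i+1})`, `ν_i` the `z`-coordinate of `h(B̃_{0,i})` (`1 ≤ i ≤ n`). -/
noncomputable def lrCoef (n : ℕ) (lam mu nu : Fin n → ℤ) : ℕ :=
  Nat.card {f : Vtx → Pt // IsHoneycomb n f ∧
    (∀ i : Fin n, (f ⟨VK.B, (i : ℤ), (n : ℤ)⟩).1 = ((-(mu i.rev) : ℤ) : ℝ)) ∧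
    (∀ i : Fin n, (f ⟨VK.B, (n : ℤ) - (i : ℤ) - 1, (n : ℤ) - (i : ℤ)⟩).2.1
      = ((-(nu i.rev) : ℤ) : ℝ)) ∧
    (∀ i : Fin n, (f ⟨VK.B, 0, (i : ℤ) + 1⟩).2.2 = ((lam i : ℤ) : ℝ)) ∧
    (∀ v, inDelta n v → latticeB (f v))}

/-- `lam ∈ Par_n`: a weakly decreasing sequence of nonnegative integers. -/
def IsPartition (n : ℕ) (lam : Fin n → ℤ) : Prop :=
  (∀ i j : Fin n, i ≤ j → lam j ≤ lam i) ∧ ∀ i, 0 ≤ lam i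

/-- The Newell–Littlewood number
`N_{λ,μ,ν} = ∑_{α,β,γ ∈ Par_n} c^λ_{β,γ} c^μ_{γ,α} c^ν_{α,β}`. -/
noncomputable def nlNum (n : ℕ) (lam mu nu : Fin n → ℤ) : ℕ :=
  ∑ᶠ (a : Fin n → ℤ), ∑ᶠ (b : Fin n → ℤ), ∑ᶠ (c : Fin n → ℤ),
    if IsPartition n a ∧ IsPartition n b ∧ IsPartition n c then
      lrCoef n lam b c * lrCoef n mu c a * lrCoef n nu a b
    else 0

/-! ### Möbius honeycombs -/

/-- The vertex set of the graph `Γ̃_n`: all `Ã_{i,j}`, `B̃_{i,j}` with `0 ≤ i ≤ n`. -/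
def inGamma (n : ℕ) (v : Vtx) : Prop := 0 ≤ v.i ∧ v.i ≤ (n : ℤ)

/-- The generating relation of the vertex equivalence `∼` on `Γ̃_n`:
`Ã_{i,j} ∼ B̃_{n-i, j-i+2n}` and `B̃_{i,j} ∼ Ã_{n-i, j-i+2n}`. -/
def vBase (n : ℕ) (v w : Vtx) : Prop :=
  (v.k = VK.A ∧ w = ⟨VK.B, (n : ℤ) - v.i, v.j - v.i + 2 * (n : ℤ)⟩) ∨
  (v.k = VK.B ∧ w = ⟨VK.A, (n : ℤ) - v.i, v.j - v.i + 2 * (n : ℤ)⟩)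

/-- The vertex equivalence relation `∼` on the vertices of `Γ̃_n`. -/
def vEquiv (n : ℕ) : Vtx → Vtx → Prop := Relation.EqvGen (vBase n)

/-- The generating relation of the equivalence `∼` on the plane `B` (parameter `δ`):
`(x,y,z) ∼ (y-2δ, x-δ, z+3δ)`. -/
def pBase (δ : ℝ) (p q : Pt) : Prop := q = (p.2.1 - 2 * δ, p.1 - δ, p.2.2 + 3 * δ)

/-- The equivalence relation `∼` on the plane `B` (parameter `δ`). -/
def pEquiv (δ : ℝ) : Pt → Pt → Prop := Relation.EqvGen (pBase δ)

/-- A Möbius honeycomb for the parameter `δ`: a configuration of the Möbius honeycomb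
tinkertoy `τ̃_n` (condition MH1), satisfying the boundary conditions (MH2) and the
equivariance condition (MH3).  (We normalize the map to vanish off `Γ̃_n` so that it
faithfully encodes a map `V_{Γ̃_n} → B`.) -/
def IsMobius (n : ℕ) (δ : ℝ) (f : Vtx → Pt) : Prop :=
  -- the image lies in the plane B
  (∀ v, inGamma n v → planeB (f v)) ∧
  -- (MH1) configuration condition
  (∀ t h d, AmbEdge t h d → inGamma n t → inGamma n h →
    ∃ a : ℝ, 0 ≤ a ∧ f h - f t = a • d) ∧
  -- (MH2) boundary conditions
  (∀ j : ℤ, 1 ≤ j → j ≤ (n : ℤ) → ∃ ξ : ℝ, 4 * δ ≤ ξ ∧ ξ ≤ 5 * δ ∧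
    f ⟨VK.A, 0, j⟩ = (-(2 * δ), 2 * δ - ξ, ξ)) ∧
  (∀ j : ℤ, (n : ℤ) + 1 ≤ j → j ≤ 2 * (n : ℤ) → ∃ ξ : ℝ, 2 * δ ≤ ξ ∧ ξ ≤ 3 * δ ∧
    f ⟨VK.A, 0, j⟩ = (-δ, δ - ξ, ξ)) ∧
  (∀ j : ℤ, 2 * (n : ℤ) + 1 ≤ j → j ≤ 3 * (n : ℤ) → ∃ ξ : ℝ, 0 ≤ ξ ∧ ξ ≤ δ ∧
    f ⟨VK.A, 0, j⟩ = (0, -ξ, ξ)) ∧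
  -- (MH3) equivariance
  (∀ v w, inGamma n v → inGamma n w → vEquiv n v w → pEquiv δ (f v) (f w)) ∧
  -- normalization off Γ̃_n
  (∀ v, ¬ inGamma n v → f v = 0)

/-- `MBdryEq n f ξ` says that the boundary `∂f` of the Möbius honeycomb `f` equals
`(ξ_1, …, ξ_{3n})`:  `ξ_j` is the `z`-coordinate of `f(Ã_{0,j})`. -/
def MBdryEq (n : ℕ) (f : Vtx → Pt) (ξ : Fin (3 * n) → ℝ) : Prop :=
  ∀ j : Fin (3 * n), (f ⟨VK.A, 0, (j : ℤ) + 1⟩).2.2 = ξ j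

/-! ### Edges of `Γ̃_n`, constant coordinates, lengths, perimeters -/

/-- The three kinds of edges of `Γ_∞` (labelled by the tail `Ã`-vertex). -/
inductive EK : Type
  | ne | sw | se
deriving DecidableEq

/-- An edge of `Γ_∞`, recorded by its kind and its tail `Ã_{i,j}`. -/
structure Edg : Type where
  k : EK
  i : ℤ
  j : ℤ
deriving DecidableEq

/-- The tail of an edge. -/
def Edg.tl (e : Edg) : Vtx := ⟨VK.A, e.i, e.j⟩

/-- The head of an edge. -/
def Edg.hd (e : Edg) : Vtx :=
  match e.k with
  | EK.ne => ⟨VK.B, e.i, e.j⟩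
  | EK.sw => ⟨VK.B, e.i - 1, e.j⟩
  | EK.se => ⟨VK.B, e.i - 1, e.j - 1⟩

/-- The direction of an edge. -/
def Edg.dir (e : Edg) : Pt :=
  match e.k with
  | EK.ne => (-1, 1, 0)
  | EK.sw => (1, 0, -1)
  | EK.se => (0, -1, 1)

/-- The edge belongs to `Γ̃_n` (both endpoints do). -/
def edgValid (n : ℕ) (e : Edg) : Prop := inGamma n e.tl ∧ inGamma n e.hd

/-- Edge equivalence `≡` on the edges of `Γ̃_n`: the endpoint pairs correspond under
the vertex equivalence `∼`, in either order.  Equivalent edges have the same image in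
the quotient graph `Γ_n`. -/
def edgEquiv (n : ℕ) (e e' : Edg) : Prop :=
  (vEquiv n e.tl e'.tl ∧ vEquiv n e.hd e'.hd) ∨
  (vEquiv n e.tl e'.hd ∧ vEquiv n e.hd e'.tl)

/-- The constant coordinate `const(f; e)` of the line containing the image of the
edge `e`: the `x`-coordinate if `d(e) = (0,-1,1)`, the `y`-coordinate if
`d(e) = (1,0,-1)`, the `z`-coordinate if `d(e) = (-1,1,0)`. -/
def constOf (f : Vtx → Pt) (e : Edg) : ℝ :=
  match e.k with
  | EK.ne => (f e.tl).2.2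
  | EK.sw => (f e.tl).2.1
  | EK.se => (f e.tl).1

/-- The length `length(f; e)` of the image of the edge `e`, in the normalized metric
`l((x,y,z), (x',y',z')) = (1/√2)·√((x-x')² + (y-y')² + (z-z')²)` on the plane `B`. -/
noncomputable def lengthOf (f : Vtx → Pt) (e : Edg) : ℝ :=
  (1 / Real.sqrt 2) *
    Real.sqrt (((f e.hd).1 - (f e.tl).1) ^ 2 + ((f e.hd).2.1 - (f e.tl).2.1) ^ 2 +
      ((f e.hd).2.2 - (f e.tl).2.2) ^ 2)

/-- The perimeter `perimeter(f; α̃_{i,j})` of the hexagon `α̃_{i,j}`: the sum of the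
lengths of its six surrounding edges. -/
noncomputable def perim (f : Vtx → Pt) (i j : ℤ) : ℝ :=
  lengthOf f ⟨EK.ne, i, j⟩ + lengthOf f ⟨EK.se, i + 1, j + 1⟩ +
    lengthOf f ⟨EK.sw, i + 1, j + 1⟩ + lengthOf f ⟨EK.ne, i, j + 1⟩ +
    lengthOf f ⟨EK.se, i, j + 1⟩ + lengthOf f ⟨EK.sw, i, j⟩

/-! ### Hexagons of `Γ_n`, weights, weighted perimeters, largest-lifts -/

/-- The index set `{(i,j) : 1 ≤ i ≤ n-1, 1 ≤ j ≤ n+i}` of the hexagons of `Γ_n`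
(a fundamental domain for the hexagons of `Γ̃_n` modulo equivalence). -/
noncomputable def hexFinset (n : ℕ) : Finset (ℤ × ℤ) :=
  ((Finset.Icc 1 ((n : ℤ) - 1)) ×ˢ (Finset.Icc 1 (2 * (n : ℤ) - 1))).filter
    (fun p => p.2 ≤ (n : ℤ) + p.1)

/-- The generating relation of hexagon equivalence: `α̃_{i,j} ∼ α̃_{n-i, j-i+2n}`. -/
def hexBase (n : ℕ) (p q : ℤ × ℤ) : Prop := q = ((n : ℤ) - p.1, p.2 - p.1 + 2 * (n : ℤ))

/-- Hexagon equivalence: hexagons of `Γ̃_n` with the same image in `Γ_n`. -/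
def hexEquiv (n : ℕ) : ℤ × ℤ → ℤ × ℤ → Prop := Relation.EqvGen (hexBase n)

/-- Two hexagons of `Γ̃_n` sharing an edge. -/
def hexNbr (p q : ℤ × ℤ) : Prop :=
  q = (p.1, p.2 + 1) ∨ q = (p.1, p.2 - 1) ∨ q = (p.1 + 1, p.2) ∨ q = (p.1 - 1, p.2) ∨
    q = (p.1 + 1, p.2 + 1) ∨ q = (p.1 - 1, p.2 - 1)

/-- The hexagon index is in the range `1 ≤ i ≤ n-1` of hexagons of `Γ̃_n`. -/
def hexInRange (n : ℕ) (p : ℤ × ℤ) : Prop := 1 ≤ p.1 ∧ p.1 ≤ (n : ℤ) - 1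

/-- Adjacency of hexagons of the quotient graph `Γ_n`:
some representatives share an edge in `Γ̃_n`. -/
def hexAdjQ (n : ℕ) (p q : ℤ × ℤ) : Prop :=
  ∃ p' q', hexInRange n p' ∧ hexInRange n q' ∧ hexEquiv n p p' ∧ hexEquiv n q q' ∧ hexNbr p' q'

/-- The weighted perimeter `wperim(f) = ∑_{α ∈ H_{Γ_n}} w(α) · perimeter(f; α̃)`. -/
noncomputable def wperimOf (n : ℕ) (w : ℤ × ℤ → ℝ) (f : Vtx → Pt) : ℝ :=
  ∑ p ∈ hexFinset n, w p * perim f p.1 p.2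

/-- A weight function on the hexagons of `Γ_n` (encoded on hexagon indices, constant
on equivalence classes) such that each value is strictly greater than one sixth of the
sum of the values at the adjacent hexagons of `Γ_n`. -/
def GoodWeight (n : ℕ) (w : ℤ × ℤ → ℝ) : Prop :=
  (∀ p q, hexEquiv n p q → w p = w q) ∧
  ∀ p ∈ hexFinset n,
    (1 / 6 : ℝ) *
        ∑ q ∈ (hexFinset n).filter (fun q => hexAdjQ n p q ∧ ¬ hexEquiv n p q), w q
      < w p

/-- `f` is a largest-lift of `ξ`:  `f ∈ MÖBIUS(τ̃_n, δ)`, `∂f = ξ`, and for some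
weight function `w` as in \eqref{eqn4.6}, `f` strictly maximizes the weighted
perimeter among Möbius honeycombs with boundary `ξ`. -/
def IsLargestLift (n : ℕ) (δ : ℝ) (ξ : Fin (3 * n) → ℝ) (f : Vtx → Pt) : Prop :=
  IsMobius n δ f ∧ MBdryEq n f ξ ∧
  ∃ w : ℤ × ℤ → ℝ, GoodWeight n w ∧
    ∀ g : Vtx → Pt, IsMobius n δ g → MBdryEq n g ξ → g ≠ f →
      wperimOf n w g < wperimOf n w f


private lemma sqrt_helper_llx (a s : ℝ) (ha : 0 ≤ a) (hs : s = 2 * a ^ 2) :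
    (1 / Real.sqrt 2) * Real.sqrt s = a := by
  rw [hs, Real.sqrt_mul (by norm_num), Real.sqrt_sq ha]
  have h2 : Real.sqrt 2 > 0 := by positivity
  field_simp

private lemma lengthOf_eq_coef (g : Vtx → Pt) (e : Edg) (a : ℝ) (ha : 0 ≤ a)
    (h : g e.hd - g e.tl = a • e.dir) : lengthOf g e = a := by
  rw [Prod.ext_iff, Prod.ext_iff] at h
  rcases e with ⟨k, i, j⟩
  cases k <;>
  · simp [Edg.dir, Prod.sub_def] at h
    obtain ⟨e1, e2, e3⟩ := h
    unfold lengthOf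
    apply sqrt_helper_llx _ _ ha
    nlinarith [e1, e2, e3]

private lemma edge_amb (e : Edg) : AmbEdge e.tl e.hd e.dir := by
  rcases e with ⟨k, i, j⟩
  cases k
  · exact AmbEdge.ne i j
  · exact AmbEdge.sw i j
  · exact AmbEdge.se i j

private lemma lengthOf_comb (n : ℕ) (δ : ℝ) (f₁ f₂ : Vtx → Pt)
    (h₁ : IsMobius n δ f₁) (h₂ : IsMobius n δ f₂)
    (c₁ c₂ : ℝ) (hc₁ : 0 ≤ c₁) (hc₂ : 0 ≤ c₂) (e : Edg) (he : edgValid n e) :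
    lengthOf (fun v => c₁ • f₁ v + c₂ • f₂ v) e
      = c₁ * lengthOf f₁ e + c₂ * lengthOf f₂ e := by
  obtain ⟨a₁, ha₁, hd₁⟩ := h₁.2.1 e.tl e.hd e.dir (edge_amb e) he.1 he.2
  obtain ⟨a₂, ha₂, hd₂⟩ := h₂.2.1 e.tl e.hd e.dir (edge_amb e) he.1 he.2
  have hcmb : (fun v => c₁ • f₁ v + c₂ • f₂ v) e.hd - (fun v => c₁ • f₁ v + c₂ • f₂ v) e.tl
      = (c₁ * a₁ + c₂ * a₂) • e.dir := by
    have : (fun v => c₁ • f₁ v + c₂ • f₂ v) e.hd - (fun v => c₁ • f₁ v + c₂ • f₂ v) e.tl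
        = c₁ • (f₁ e.hd - f₁ e.tl) + c₂ • (f₂ e.hd - f₂ e.tl) := by
      simp only []
      module
    rw [this, hd₁, hd₂, smul_smul, smul_smul, ← add_smul]
  rw [lengthOf_eq_coef _ _ _ (by positivity) hcmb,
    lengthOf_eq_coef f₁ e a₁ ha₁ hd₁, lengthOf_eq_coef f₂ e a₂ ha₂ hd₂]

private lemma perim_comb (n : ℕ) (δ : ℝ) (f₁ f₂ : Vtx → Pt)
    (h₁ : IsMobius n δ f₁) (h₂ : IsMobius n δ f₂)
    (c₁ c₂ : ℝ) (hc₁ : 0 ≤ c₁) (hc₂ : 0 ≤ c₂) (i j : ℤ)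
    (hi : 1 ≤ i) (hi' : i ≤ (n : ℤ) - 1) :
    perim (fun v => c₁ • f₁ v + c₂ • f₂ v) i j
      = c₁ * perim f₁ i j + c₂ * perim f₂ i j := by
  have hv : ∀ e : Edg, 1 ≤ e.tl.i → e.tl.i ≤ (n : ℤ) → 0 ≤ e.hd.i → e.hd.i ≤ (n : ℤ)
      → edgValid n e := fun e a b c d => ⟨⟨by omega, b⟩, ⟨c, d⟩⟩
  unfold perim
  rw [lengthOf_comb n δ f₁ f₂ h₁ h₂ c₁ c₂ hc₁ hc₂ ⟨EK.ne, i, j⟩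
      (hv _ (by simp only [Edg.tl]; omega) (by simp only [Edg.tl]; omega) (by simp only [Edg.hd]; omega)
        (by simp only [Edg.hd]; omega)),
    lengthOf_comb n δ f₁ f₂ h₁ h₂ c₁ c₂ hc₁ hc₂ ⟨EK.se, i + 1, j + 1⟩
      (hv _ (by simp only [Edg.tl]; omega) (by simp only [Edg.tl]; omega) (by simp only [Edg.hd]; omega)
        (by simp only [Edg.hd]; omega)),
    lengthOf_comb n δ f₁ f₂ h₁ h₂ c₁ c₂ hc₁ hc₂ ⟨EK.sw, i + 1, j + 1⟩
      (hv _ (by simp only [Edg.tl]; omega) (by simp only [Edg.tl]; omega) (by simp only [Edg.hd]; omega)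
        (by simp only [Edg.hd]; omega)),
    lengthOf_comb n δ f₁ f₂ h₁ h₂ c₁ c₂ hc₁ hc₂ ⟨EK.ne, i, j + 1⟩
      (hv _ (by simp only [Edg.tl]; omega) (by simp only [Edg.tl]; omega) (by simp only [Edg.hd]; omega)
        (by simp only [Edg.hd]; omega)),
    lengthOf_comb n δ f₁ f₂ h₁ h₂ c₁ c₂ hc₁ hc₂ ⟨EK.se, i, j + 1⟩
      (hv _ (by simp only [Edg.tl]; omega) (by simp only [Edg.tl]; omega) (by simp only [Edg.hd]; omega)
        (by simp only [Edg.hd]; omega)),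
    lengthOf_comb n δ f₁ f₂ h₁ h₂ c₁ c₂ hc₁ hc₂ ⟨EK.sw, i, j⟩
      (hv _ (by simp only [Edg.tl]; omega) (by simp only [Edg.tl]; omega) (by simp only [Edg.hd]; omega)
        (by simp only [Edg.hd]; omega))]
  ring

private lemma wperim_comb (n : ℕ) (δ : ℝ) (w : ℤ × ℤ → ℝ) (f₁ f₂ : Vtx → Pt)
    (h₁ : IsMobius n δ f₁) (h₂ : IsMobius n δ f₂)
    (c₁ c₂ : ℝ) (hc₁ : 0 ≤ c₁) (hc₂ : 0 ≤ c₂) :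
    wperimOf n w (fun v => c₁ • f₁ v + c₂ • f₂ v)
      = c₁ * wperimOf n w f₁ + c₂ * wperimOf n w f₂ := by
  unfold wperimOf
  rw [Finset.mul_sum, Finset.mul_sum, ← Finset.sum_add_distrib]
  apply Finset.sum_congr rfl
  intro p hp
  have hp' : 1 ≤ p.1 ∧ p.1 ≤ (n : ℤ) - 1 := by
    simp [hexFinset, Finset.mem_filter, Finset.mem_product] at hp
    exact ⟨hp.1.1.1, by have := hp.1.1.2; omega⟩
  rw [perim_comb n δ f₁ f₂ h₁ h₂ c₁ c₂ hc₁ hc₂ p.1 p.2 hp'.1 hp'.2]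
  ring

/-- **Lemma 3.4 (first part)**: a largest-lift `h̃` of `ξ ∈ BDRY(τ̃_n, δ)` is an
extreme point: if `h̃ = c₁·h̃₁ + c₂·h̃₂` with `h̃₁, h̃₂ ∈ ∂⁻¹(ξ)`, `c₁, c₂ ≥ 0` and
`c₁ + c₂ = 1`, then `h̃ = h̃₁` or `h̃ = h̃₂`. -/
theorem largest_lift_extreme (n : ℕ) (δ : ℕ) (hδ : 0 < δ) (ξ : Fin (3 * n) → ℝ)
    (f : Vtx → Pt) (hf : IsLargestLift n (δ : ℝ) ξ f)
    (f₁ f₂ : Vtx → Pt) (h₁ : IsMobius n (δ : ℝ) f₁) (h₂ : IsMobius n (δ : ℝ) f₂)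
    (hb₁ : MBdryEq n f₁ ξ) (hb₂ : MBdryEq n f₂ ξ)
    (c₁ c₂ : ℝ) (hc₁ : 0 ≤ c₁) (hc₂ : 0 ≤ c₂) (hsum : c₁ + c₂ = 1)
    (hcomb : f = fun v => c₁ • f₁ v + c₂ • f₂ v) :
    f = f₁ ∨ f = f₂ :=  by
  by_cases hz₁ : c₁ = 0
  · right
    have hc2 : c₂ = 1 := by linarith
    funext v
    rw [hcomb]
    simp [hz₁, hc2]
  by_cases hz₂ : c₂ = 0
  · left
    have hc1 : c₁ = 1 := by linarith
    funext v
    rw [hcomb]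
    simp [hz₂, hc1]
  by_contra hcon
  push_neg at hcon
  obtain ⟨hne₁, hne₂⟩ := hcon
  obtain ⟨hmob, hbd, w, hw, hmax⟩ := hf
  have hlt₁ := hmax f₁ h₁ hb₁ (fun h => hne₁ h.symm)
  have hlt₂ := hmax f₂ h₂ hb₂ (fun h => hne₂ h.symm)
  have hkey : wperimOf n w f = c₁ * wperimOf n w f₁ + c₂ * wperimOf n w f₂ := by
    rw [hcomb]
    exact wperim_comb n (δ : ℝ) w f₁ f₂ h₁ h₂ c₁ c₂ hc₁ hc₂
  have hp₁ : 0 < c₁ := lt_of_le_of_ne hc₁ (Ne.symm hz₁)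
  have hp₂ : 0 < c₂ := lt_of_le_of_ne hc₂ (Ne.symm hz₂)
  have h3 : c₁ * wperimOf n w f + c₂ * wperimOf n w f = wperimOf n w f := by
    rw [← add_mul, hsum, one_mul]
  linarith [mul_lt_mul_of_pos_left hlt₁ hp₁, mul_lt_mul_of_pos_left hlt₂ hp₂]
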